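/- Σ_{i=1}^n ‖C X_i‖² = n + tr(φ ∘ B), where φ ∘ B is regarded as a linear endomorphism of V⊥ (it maps V⊥ into V⊥ since B takes values in V and φ(V) ⊆ V⊥). Consequently Σ_{i,j=1}^n ⟨C X_i, X_j⟩² = n + tr(φ ∘ B). -/

import Mathlib

open scoped RealInnerProductSpace

/-- `Σ ‖C Xᵢ‖² = n + tr(φ ∘ B)` for an anti-invariant vertical distribution
containing the Reeb vector field. -/
theorem stmt_17 {E : Type*} [NormedAddCommGroup E] [InnerProductSpace ℝ E]
    [FiniteDimensional ℝ E]
    (ξ : E) (hξ : ‖ξ‖ = 1) (η : E → ℝ) (hη : ∀ X, η X = ⟪X, ξ⟫)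
    (φ : E →ₗ[ℝ] E) (hskew : ∀ X Y, ⟪φ X, Y⟫ = -⟪X, φ Y⟫)
    (hφ2 : ∀ X, φ (φ X) = -X + η X • ξ)
    (V : Submodule ℝ E) (hξV : ξ ∈ V) (hanti : ∀ v ∈ V, φ v ∈ Vᗮ)
    (B C : E → E)
    (hB : ∀ x, B x = (V.orthogonalProjectionOnto (φ x) : E))
    (hC : ∀ x, C x = (Vᗮ.orthogonalProjectionOnto (φ x) : E))
    (n : ℕ) (X : OrthonormalBasis (Fin n) ℝ ↥Vᗮ)
    (F : ↥Vᗮ →ₗ[ℝ] ↥Vᗮ) (hF : ∀ x : ↥Vᗮ, (F x : E) = φ (B (x : E))) :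
    (∑ i, ‖C (X i : E)‖ ^ 2 = (n : ℝ) + LinearMap.trace ℝ ↥Vᗮ F) ∧
    (∑ i, ∑ j, ⟪C (X i : E), (X j : E)⟫ ^ 2 = (n : ℝ) + LinearMap.trace ℝ ↥Vᗮ F) := by
  -- decomposition φ x = B x + C x
  have hdec : ∀ x : E, B x + C x = φ x := by
    intro x
    rw [hB, hC]
    exact V.starProjection_add_starProjection_orthogonal (φ x)
  have hBmem : ∀ x : E, B x ∈ V := fun x => by rw [hB]; exact (V.orthogonalProjectionOnto (φ x)).2
  have hCmem : ∀ x : E, C x ∈ Vᗮ := fun x => by rw [hC]; exact (Vᗮ.orthogonalProjectionOnto (φ x)).2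
  have hBC : ∀ x : E, ⟪B x, C x⟫ = 0 := fun x => (hCmem x) (B x) (hBmem x)
  -- norm of φ x for x in Vᗮ
  have hφnorm : ∀ i, ‖φ (X i : E)‖ ^ 2 = 1 := by
    intro i
    have hx : ((X i : E)) ∈ Vᗮ := (X i).2
    have hxi : ⟪(X i : E), ξ⟫ = 0 := by rw [real_inner_comm]; exact hx ξ hξV
    have h1 : ⟪φ (X i : E), φ (X i : E)⟫ = 1 := by
      rw [hskew, hφ2]
      have hnx : ‖(X i : E)‖ = 1 := by
        rw [Submodule.norm_coe]; exact X.orthonormal.1 i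
      rw [inner_add_right, inner_neg_right, inner_smul_right, hxi,
        real_inner_self_eq_norm_sq, hnx]
      ring
    rw [← real_inner_self_eq_norm_sq, h1]
  -- Pythagoras: ‖C x‖² = ‖φ x‖² - ‖B x‖²
  have hpyth : ∀ x : E, ‖φ x‖ ^ 2 = ‖B x‖ ^ 2 + ‖C x‖ ^ 2 := by
    intro x
    have h2 : ⟪C x, B x⟫ = 0 := by rw [real_inner_comm]; exact hBC x
    rw [← hdec x, ← real_inner_self_eq_norm_sq, ← real_inner_self_eq_norm_sq,
      ← real_inner_self_eq_norm_sq, inner_add_add_self, hBC, h2]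
    ring
  -- diagonal entries
  have hdiag : ∀ i, ⟪F (X i), X i⟫ = -‖B (X i : E)‖ ^ 2 := by
    intro i
    have : ⟪F (X i), X i⟫ = ⟪(F (X i) : E), (X i : E)⟫ := rfl
    rw [this, hF, hskew, ← hdec, inner_add_right, hBC, real_inner_self_eq_norm_sq]
    ring
  -- trace
  have htr : LinearMap.trace ℝ ↥Vᗮ F = ∑ i, ⟪F (X i), X i⟫ := by
    rw [LinearMap.trace_eq_matrix_trace ℝ X.toBasis F, Matrix.trace]
    congr 1
    ext i
    rw [Matrix.diag_apply, LinearMap.toMatrix_apply, X.coe_toBasis_repr_apply,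
      X.repr_apply_apply, real_inner_comm, X.coe_toBasis]
  have key : ∑ i, ‖C (X i : E)‖ ^ 2 = (n : ℝ) + LinearMap.trace ℝ ↥Vᗮ F := by
    rw [htr]
    have : ∀ i, ‖C (X i : E)‖ ^ 2 = 1 + ⟪F (X i), X i⟫ := by
      intro i
      have := hpyth (X i : E)
      rw [hφnorm i] at this
      rw [hdiag i]
      linarith
    simp_rw [this, Finset.sum_add_distrib, Finset.sum_const, Finset.card_univ,
      Fintype.card_fin, nsmul_eq_mul, mul_one]
  refine ⟨key, ?_⟩
  rw [← key]
  congr 1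
  ext i
  -- ∑ j ⟪C x, X j⟫² = ‖C x‖²
  have hCv : (⟨C (X i : E), hCmem _⟩ : ↥Vᗮ) = (⟨C (X i : E), hCmem _⟩ : ↥Vᗮ) := rfl
  have := X.sum_inner_mul_inner (⟨C (X i : E), hCmem _⟩ : ↥Vᗮ) (⟨C (X i : E), hCmem _⟩ : ↥Vᗮ)
  have hco : ∀ j, ⟪C (X i : E), (X j : E)⟫ = ⟪(⟨C (X i : E), hCmem _⟩ : ↥Vᗮ), X j⟫ := fun j => rfl
  calc ∑ j, ⟪C (X i : E), (X j : E)⟫ ^ 2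
      = ∑ j, ⟪(⟨C (X i : E), hCmem _⟩ : ↥Vᗮ), X j⟫ * ⟪X j, (⟨C (X i : E), hCmem _⟩ : ↥Vᗮ)⟫ := by
        refine Finset.sum_congr rfl fun j _ => ?_
        rw [hco j, sq, real_inner_comm ((⟨C (X i : E), hCmem _⟩ : ↥Vᗮ)) (X j)]
    _ = ‖C (X i : E)‖ ^ 2 := by
        rw [this]
        exact real_inner_self_eq_norm_sq _
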